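/- Let n ≥ 1 and let a₀(x), a₁(x), …, a_{n−1}(x) be real continuous functions on an open interval I = (a,b). Then there exists an n-times differentiable function y : I → ℝ satisfying the linear ordinary differential equation y^{(n)}(x) + a_{n−1}(x) y^{(n−1)}(x) + ⋯ + a₀(x) y(x) = 0 for all x ∈ I, such that y, y', …, y^{(n−1)} are linearly independent over I. -/

import Mathlib

open Set Metric Real
open scoped NNReal

set_option maxHeartbeats 1000000
set_option linter.unusedSectionVars false
set_option linter.unusedVariables false

section ODE

variable {E : Type*} [NormedAddCommGroup E] [NormedSpace ℝ E] [CompleteSpace E]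

/-- Local existence on a short interval, for a vector field with linear growth. -/
private lemma step_exists {v : ℝ → E → E} {L : ℝ≥0} {s m : ℝ} (hsm : s ≤ m)
    (hlen : m - s ≤ 1 / (2 * ((L : ℝ) + 1)))
    (hlip : ∀ t ∈ Icc s m, LipschitzWith L (v t))
    (hnorm : ∀ t ∈ Icc s m, ∀ x, ‖v t x‖ ≤ L * ‖x‖)
    (hcont : ∀ x, ContinuousOn (fun t => v t x) (Icc s m)) (x₀ : E) :
    ∃ f : ℝ → E, f s = x₀ ∧ ∀ t ∈ Icc s m, HasDerivWithinAt f (v t (f t)) (Icc s m) t := by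
  set R : ℝ := max ‖x₀‖ 1 with hR
  set C : ℝ := L * (‖x₀‖ + R) with hC
  have hR0 : (0:ℝ) ≤ R := le_trans zero_le_one (le_max_right _ _)
  have hx₀R : ‖x₀‖ ≤ R := le_max_left _ _
  have hL : (0:ℝ) ≤ L := L.2
  have hCnn : 0 ≤ C := by
    have : (0:ℝ) ≤ ‖x₀‖ + R := by positivity
    exact mul_nonneg hL this
  have hpl : IsPicardLindelof v (tmin := s) (tmax := m) ⟨s, le_rfl, hsm⟩ x₀
      R.toNNReal 0 C.toNNReal L :=
    { lipschitzOnWith := fun t ht => (hlip t ht).lipschitzOnWith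
      continuousOn := fun x _ => hcont x
      norm_le := fun t ht x hx => by
        rw [Real.coe_toNNReal _ hCnn]
        rw [Real.coe_toNNReal _ hR0] at hx
        refine (hnorm t ht x).trans ?_
        have h2 : dist x x₀ ≤ R := mem_closedBall.mp hx
        have h3 : ‖x - x₀‖ = dist x x₀ := (dist_eq_norm _ _).symm
        have h4 : ‖x‖ - ‖x₀‖ ≤ ‖x - x₀‖ := norm_sub_norm_le x x₀
        have : ‖x‖ ≤ ‖x₀‖ + R := by linarith
        rw [hC]
        nlinarith
      mul_max_le := by
        simp only [NNReal.coe_zero, sub_zero, Real.coe_toNNReal _ hCnn, Real.coe_toNNReal _ hR0]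
        have h1 : max (m - s) (s - s) = m - s := by
          rw [sub_self]; exact max_eq_left (by linarith)
        rw [h1]
        have hms : 0 ≤ m - s := by linarith
        have hden : (0:ℝ) < 2 * ((L:ℝ) + 1) := by positivity
        calc C * (m - s) ≤ C * (1 / (2 * ((L:ℝ) + 1))) := by
              exact mul_le_mul_of_nonneg_left hlen hCnn
        _ = (L:ℝ) * (‖x₀‖ + R) / (2 * ((L:ℝ)+1)) := by rw [hC]; ring
        _ ≤ (‖x₀‖ + R) / 2 := by
              rw [div_le_div_iff₀ hden (by norm_num)]
              have : (0:ℝ) ≤ ‖x₀‖ + R := by positivity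
              nlinarith
        _ ≤ R := by
              have : ‖x₀‖ ≤ R := hx₀R
              linarith }
  exact hpl.exists_eq_forall_mem_Icc_hasDerivWithinAt₀

/-- Gluing two solutions matching at the junction. -/
private lemma glue_solution {v : ℝ → E → E} {c m d : ℝ} (hcm : c ≤ m) (hmd : m ≤ d)
    {g h : ℝ → E} (hgh : g m = h m)
    (hg : ∀ t ∈ Icc c m, HasDerivWithinAt g (v t (g t)) (Icc c m) t)
    (hh : ∀ t ∈ Icc m d, HasDerivWithinAt h (v t (h t)) (Icc m d) t) :
    ∃ f : ℝ → E, (∀ t ∈ Icc c m, f t = g t) ∧ (∀ t ∈ Icc m d, f t = h t) ∧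
      ∀ t ∈ Icc c d, HasDerivWithinAt f (v t (f t)) (Icc c d) t := by
  refine ⟨fun t => if t ≤ m then g t else h t, ?_, ?_, ?_⟩
  · intro t ht; simp [ht.2]
  · intro t ht
    rcases eq_or_lt_of_le ht.1 with h1 | h1
    · simp [← h1, hgh]
    · simp [not_le.mpr h1]
  · intro t ht
    set f : ℝ → E := fun t => if t ≤ m then g t else h t with hf
    have hfg : EqOn f g (Icc c m) := fun t ht => by simp [hf, ht.2]
    have hfh : EqOn f h (Icc m d) := fun t ht => by
      rcases eq_or_lt_of_le ht.1 with h1 | h1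
      · simp [hf, ← h1, hgh]
      · simp [hf, not_le.mpr h1]
    rcases lt_trichotomy t m with h1 | h1 | h1
    · have htm : t ∈ Icc c m := ⟨ht.1, h1.le⟩
      have := ((hg t htm).congr hfg (hfg htm)).mono_of_mem_nhdsWithin
        (Filter.mem_of_superset (inter_mem_nhdsWithin (Icc c d) (Iic_mem_nhds h1))
          (fun x hx => ⟨hx.1.1, hx.2⟩))
      rwa [← hfg htm] at this
    · subst h1
      have htm : t ∈ Icc c t := ⟨ht.1, le_rfl⟩
      have htd : t ∈ Icc t d := ⟨le_rfl, ht.2⟩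
      have Hg : HasDerivWithinAt f (v t (f t)) (Icc c t) t := by
        have := (hg t htm).congr hfg (hfg htm)
        rwa [← hfg htm] at this
      have Hh : HasDerivWithinAt f (v t (f t)) (Icc t d) t := by
        have := (hh t htd).congr hfh (hfh htd)
        rwa [← hfh htd] at this
      have := Hg.union Hh
      rwa [Icc_union_Icc_eq_Icc ht.1 ht.2] at this
    · have htm : t ∈ Icc m d := ⟨h1.le, ht.2⟩
      have := ((hh t htm).congr hfh (hfh htm)).mono_of_mem_nhdsWithin
        (Filter.mem_of_superset (inter_mem_nhdsWithin (Icc c d) (Ici_mem_nhds h1))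
          (fun x hx => ⟨hx.2, hx.1.2⟩))
      rwa [← hfh htm] at this

/-- Forward global existence by continuation. -/
private lemma forward_exists {v : ℝ → E → E} {L : ℝ≥0} {c d : ℝ}
    (hlip : ∀ t ∈ Icc c d, LipschitzWith L (v t))
    (hnorm : ∀ t ∈ Icc c d, ∀ x, ‖v t x‖ ≤ L * ‖x‖)
    (hcont : ∀ x, ContinuousOn (fun t => v t x) (Icc c d)) :
    ∀ k : ℕ, ∀ s ∈ Icc c d, d - s ≤ k * (1 / (2 * ((L:ℝ) + 1))) → ∀ x₀ : E,
      ∃ f : ℝ → E, f s = x₀ ∧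
        ∀ t ∈ Icc s d, HasDerivWithinAt f (v t (f t)) (Icc s d) t := by
  have hτ : (0:ℝ) < 1 / (2 * ((L:ℝ) + 1)) := by positivity
  set τ : ℝ := 1 / (2 * ((L:ℝ) + 1)) with hτdef
  intro k
  induction k with
  | zero =>
    intro s hs hlen x₀
    have hsd : s ≤ d := hs.2
    have hsub : Icc s d ⊆ Icc c d := Icc_subset_Icc hs.1 le_rfl
    exact step_exists hsd (by simp only [Nat.cast_zero, zero_mul] at hlen; rw [hτdef] at hτ; linarith)
      (fun t ht => hlip t (hsub ht)) (fun t ht => hnorm t (hsub ht))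
      (fun x => (hcont x).mono hsub) x₀
  | succ k ih =>
    intro s hs hlen x₀
    have hsd : s ≤ d := hs.2
    by_cases hshort : d - s ≤ τ
    · have hsub : Icc s d ⊆ Icc c d := Icc_subset_Icc hs.1 le_rfl
      exact step_exists hsd hshort (fun t ht => hlip t (hsub ht))
        (fun t ht => hnorm t (hsub ht)) (fun x => (hcont x).mono hsub) x₀
    · push_neg at hshort
      set s' : ℝ := s + τ with hs'def
      have hss' : s ≤ s' := by simp [hs'def]; exact hτ.le
      have hs'd : s' ≤ d := by simp only [hs'def]; linarith
      have hs'mem : s' ∈ Icc c d := ⟨hs.1.trans hss', hs'd⟩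
      have hsub1 : Icc s s' ⊆ Icc c d := Icc_subset_Icc hs.1 hs'd
      obtain ⟨g, hg0, hg⟩ := step_exists hss' (by
        have h5 : s + τ - s = τ := by ring
        rw [hs'def, h5, hτdef])
        (fun t ht => hlip t (hsub1 ht)) (fun t ht => hnorm t (hsub1 ht))
        (fun x => (hcont x).mono hsub1) x₀
      obtain ⟨h, hh0, hh⟩ := ih s' hs'mem (by
        push_cast at hlen
        simp only [hs'def]; linarith) (g s')
      obtain ⟨f, hf1, hf2, hf3⟩ := glue_solution hss' hs'd hh0.symm hg hh
      exact ⟨f, by rw [hf1 s ⟨le_rfl, hss'⟩, hg0], hf3⟩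

/-- Global existence on a compact interval for linear-growth Lipschitz fields,
with initial condition anywhere in the interval. -/
private lemma global_exists {v : ℝ → E → E} {L : ℝ≥0} {c d : ℝ}
    (hlip : ∀ t ∈ Icc c d, LipschitzWith L (v t))
    (hnorm : ∀ t ∈ Icc c d, ∀ x, ‖v t x‖ ≤ L * ‖x‖)
    (hcont : ∀ x, ContinuousOn (fun t => v t x) (Icc c d))
    {t₀ : ℝ} (ht₀ : t₀ ∈ Icc c d) (x₀ : E) :
    ∃ f : ℝ → E, f t₀ = x₀ ∧
      ∀ t ∈ Icc c d, HasDerivWithinAt f (v t (f t)) (Icc c d) t := by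
  have hτ : (0:ℝ) < 1 / (2 * ((L:ℝ) + 1)) := by positivity
  set τ : ℝ := 1 / (2 * ((L:ℝ) + 1)) with hτdef
  -- forward solution on [t₀, d]
  have hk : ∀ s : ℝ, c ≤ s → d - s ≤ (⌈(d - c) / τ⌉₊ : ℝ) * τ := by
    intro s hcs
    have h1 : (d - c) / τ ≤ (⌈(d - c) / τ⌉₊ : ℝ) := Nat.le_ceil _
    have h2 : d - c ≤ (⌈(d - c) / τ⌉₊ : ℝ) * τ := by
      rw [← div_le_iff₀ hτ] at *; linarith
    linarith
  obtain ⟨fp, hfp0, hfp⟩ := forward_exists hlip hnorm hcont (⌈(d - c) / τ⌉₊) t₀ ht₀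
    (hk t₀ ht₀.1) x₀
  -- backward solution on [c, t₀] via time reversal
  have hneg : ∀ t ∈ Icc (-d) (-c), -t ∈ Icc c d := fun t ht =>
    ⟨le_neg.mp ht.2, neg_le.mp ht.1⟩
  have hlip' : ∀ t ∈ Icc (-d) (-c), LipschitzWith L (fun x => -v (-t) x) := by
    intro t ht
    have := hlip (-t) (hneg t ht)
    intro x y
    simpa [edist_neg_neg] using this x y
  have hnorm' : ∀ t ∈ Icc (-d) (-c), ∀ x, ‖-v (-t) x‖ ≤ L * ‖x‖ := by
    intro t ht x; simpa using hnorm (-t) (hneg t ht) x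
  have hcont' : ∀ x, ContinuousOn (fun t => -v (-t) x) (Icc (-d) (-c)) := by
    intro x
    have : ContinuousOn (fun t : ℝ => v (-t) x) (Icc (-d) (-c)) :=
      (hcont x).comp continuousOn_neg (fun t ht => hneg t ht)
    exact this.neg
  have ht₀' : -t₀ ∈ Icc (-d) (-c) := ⟨neg_le_neg ht₀.2, neg_le_neg ht₀.1⟩
  have hk' : -c - (-t₀) ≤ (⌈(-c - (-d)) / τ⌉₊ : ℝ) * τ := by
    have h1 : (-c - -d) / τ ≤ (⌈(-c - -d) / τ⌉₊ : ℝ) := Nat.le_ceil _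
    have h2 : -c - -d ≤ (⌈(-c - -d) / τ⌉₊ : ℝ) * τ := by
      rw [← div_le_iff₀ hτ] at *; linarith
    have h3 := ht₀.1
    have h4 := ht₀.2
    linarith
  obtain ⟨g', hg'0, hg'⟩ := forward_exists hlip' hnorm' hcont' (⌈(-c - -d) / τ⌉₊) (-t₀)
    ht₀' hk' x₀
  set g : ℝ → E := fun t => g' (-t) with hgdef
  have hg0 : g t₀ = x₀ := by simpa [hgdef] using hg'0
  have hg : ∀ t ∈ Icc c t₀, HasDerivWithinAt g (v t (g t)) (Icc c t₀) t := by
    intro t ht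
    have htmem : -t ∈ Icc (-t₀) (-c) := ⟨neg_le_neg ht.2, neg_le_neg ht.1⟩
    have H := hg' (-t) htmem
    have hmaps : MapsTo Neg.neg (Icc c t₀) (Icc (-t₀) (-c)) := fun x hx =>
      ⟨neg_le_neg hx.2, neg_le_neg hx.1⟩
    have := H.scomp t ((hasDerivAt_neg t).hasDerivWithinAt) hmaps
    simpa [hgdef, Function.comp_def] using this
  obtain ⟨f, hf1, hf2, hf3⟩ := glue_solution ht₀.1 ht₀.2 (hg0.trans hfp0.symm) hg hfp
  exact ⟨f, by rw [hf1 t₀ ⟨ht₀.1, le_rfl⟩, hg0], hf3⟩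

end ODE


section ODE

variable {E : Type*} [NormedAddCommGroup E] [NormedSpace ℝ E]

/-- Uniqueness of solutions on a compact interval, initial time anywhere inside. -/
private lemma unique_on_Icc {v : ℝ → E → E} {K : ℝ≥0} {c d t₀ : ℝ}
    (hv : ∀ t ∈ Icc c d, LipschitzWith K (v t)) (ht₀ : t₀ ∈ Icc c d) {f g : ℝ → E}
    (hf : ∀ t ∈ Icc c d, HasDerivWithinAt f (v t (f t)) (Icc c d) t)
    (hg : ∀ t ∈ Icc c d, HasDerivWithinAt g (v t (g t)) (Icc c d) t)
    (heq : f t₀ = g t₀) : EqOn f g (Icc c d) := by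
  have hcd : c ≤ d := ht₀.1.trans ht₀.2
  set w : ℝ → E → E := fun t x => v (max c (min t d)) x with hw
  have hclamp : ∀ t ∈ Icc c d, max c (min t d) = t := fun t ht => by
    rw [min_eq_left ht.2, max_eq_right ht.1]
  have hwv : ∀ t ∈ Icc c d, ∀ x, w t x = v t x := fun t ht x => by
    simp only [hw, hclamp t ht]
  have hwl : ∀ t, LipschitzOnWith K (w t) univ := fun t =>
    ((hv _ ⟨le_max_left _ _, max_le hcd (min_le_right _ _)⟩)).lipschitzOnWith
  have hfc : ∀ p q, Icc p q ⊆ Icc c d → ContinuousOn f (Icc p q) := fun p q hpq t ht =>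
    ((hf t (hpq ht)).continuousWithinAt).mono hpq
  have hgc : ∀ p q, Icc p q ⊆ Icc c d → ContinuousOn g (Icc p q) := fun p q hpq t ht =>
    ((hg t (hpq ht)).continuousWithinAt).mono hpq
  have key : Icc c d = Icc c t₀ ∪ Icc t₀ d := (Icc_union_Icc_eq_Icc ht₀.1 ht₀.2).symm
  rw [key]
  apply EqOn.union
  · -- left part, initial time at right end t₀
    have hsub : Icc c t₀ ⊆ Icc c d := Icc_subset_Icc le_rfl ht₀.2
    refine ODE_solution_unique_of_mem_Icc_left (s := fun _ => univ) (fun t _ => hwl t)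
      (hfc c t₀ hsub) ?_ (fun _ _ => mem_univ _)
      (hgc c t₀ hsub) ?_ (fun _ _ => mem_univ _) heq
    · intro t ht
      have htm : t ∈ Icc c d := ⟨ht.1.le, ht.2.trans ht₀.2⟩
      rw [hwv t htm]
      exact (hf t htm).mono_of_mem_nhdsWithin
        (Filter.mem_of_superset (inter_mem_nhdsWithin (Iic t) (Ioi_mem_nhds ht.1))
          (fun x hx => ⟨hx.2.le, hx.1.trans htm.2⟩))
    · intro t ht
      have htm : t ∈ Icc c d := ⟨ht.1.le, ht.2.trans ht₀.2⟩
      rw [hwv t htm]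
      exact (hg t htm).mono_of_mem_nhdsWithin
        (Filter.mem_of_superset (inter_mem_nhdsWithin (Iic t) (Ioi_mem_nhds ht.1))
          (fun x hx => ⟨hx.2.le, hx.1.trans htm.2⟩))
  · -- right part, initial time at left end t₀
    have hsub : Icc t₀ d ⊆ Icc c d := Icc_subset_Icc ht₀.1 le_rfl
    refine ODE_solution_unique_of_mem_Icc_right (s := fun _ => univ) (fun t _ => hwl t)
      (hfc t₀ d hsub) ?_ (fun _ _ => mem_univ _)
      (hgc t₀ d hsub) ?_ (fun _ _ => mem_univ _) heq
    · intro t ht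
      have htm : t ∈ Icc c d := ⟨ht₀.1.trans ht.1, ht.2.le⟩
      rw [hwv t htm]
      exact (hf t htm).mono_of_mem_nhdsWithin
        (Filter.mem_of_superset (inter_mem_nhdsWithin (Ici t) (Iio_mem_nhds ht.2))
          (fun x hx => ⟨htm.1.trans hx.1, hx.2.le⟩))
    · intro t ht
      have htm : t ∈ Icc c d := ⟨ht₀.1.trans ht.1, ht.2.le⟩
      rw [hwv t htm]
      exact (hg t htm).mono_of_mem_nhdsWithin
        (Filter.mem_of_superset (inter_mem_nhdsWithin (Ici t) (Iio_mem_nhds ht.2))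
          (fun x hx => ⟨htm.1.trans hx.1, hx.2.le⟩))

end ODE


/-- Companion first-order vector field of the linear ODE. -/
private def vf (n : ℕ) (A : ℕ → ℝ → ℝ) : ℝ → (Fin n → ℝ) → (Fin n → ℝ) :=
  fun t x i => if h : (i : ℕ) + 1 < n then x ⟨(i:ℕ)+1, h⟩ else -∑ j : Fin n, A (j:ℕ) t * x j

private lemma vf_bound {n : ℕ} {a b : ℝ} {A : ℕ → ℝ → ℝ}
    (hA : ∀ i < n, ContinuousOn (A i) (Set.Ioo a b))
    {c d : ℝ} (hc : a < c) (hd : d < b) (hcd : c ≤ d) :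
    ∃ L : ℝ≥0, (∀ t ∈ Icc c d, LipschitzWith L (vf n A t)) ∧
      (∀ t ∈ Icc c d, ∀ x, ‖vf n A t x‖ ≤ L * ‖x‖) ∧
      (∀ x, ContinuousOn (fun t => vf n A t x) (Icc c d)) := by
  have hsub : Icc c d ⊆ Ioo a b := fun x hx => ⟨hc.trans_le hx.1, hx.2.trans_lt hd⟩
  have hB : ∀ j : Fin n, ∃ B : ℝ, ∀ t ∈ Icc c d, ‖A (j:ℕ) t‖ ≤ B := fun j =>
    isCompact_Icc.exists_bound_of_continuousOn ((hA j j.2).mono hsub)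
  choose B hBs using hB
  set Btot : ℝ := ∑ j : Fin n, max (B j) 0 with hBtot
  have hBtot0 : 0 ≤ Btot := Finset.sum_nonneg fun j _ => le_max_right _ _
  have hterm : ∀ t ∈ Icc c d, ∀ j : Fin n, |A (j:ℕ) t| ≤ max (B j) 0 := fun t ht j =>
    le_trans (by simpa using hBs j t ht) (le_max_left _ _)
  set L : ℝ≥0 := (1 + Btot).toNNReal with hL
  have hLval : (L : ℝ) = 1 + Btot := Real.coe_toNNReal _ (by linarith)
  have hL1 : (1:ℝ) ≤ L := by rw [hLval]; linarith
  have hsumest : ∀ t ∈ Icc c d, ∀ (z : Fin n → ℝ) (r : ℝ), 0 ≤ r →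
      (∀ j, |z j| ≤ r) → |∑ j : Fin n, A (j:ℕ) t * z j| ≤ Btot * r := by
    intro t ht z r hr hz
    calc |∑ j : Fin n, A (j:ℕ) t * z j| ≤ ∑ j : Fin n, |A (j:ℕ) t * z j| := Finset.abs_sum_le_sum_abs _ _
    _ ≤ ∑ j : Fin n, max (B j) 0 * r := by
        refine Finset.sum_le_sum fun j _ => ?_
        rw [abs_mul]
        exact mul_le_mul (hterm t ht j) (hz j) (abs_nonneg _)
          (le_trans (abs_nonneg _) (hterm t ht j))
    _ = Btot * r := by rw [hBtot, Finset.sum_mul]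
  refine ⟨L, ?_, ?_, ?_⟩
  · intro t ht
    refine LipschitzWith.of_dist_le_mul fun x y => ?_
    rw [dist_pi_le_iff (by positivity)]
    intro i
    by_cases h : (i : ℕ) + 1 < n
    · simp only [vf, dif_pos h]
      calc dist (x ⟨(i:ℕ)+1, h⟩) (y ⟨(i:ℕ)+1, h⟩) ≤ dist x y := dist_le_pi_dist x y _
      _ ≤ L * dist x y := le_mul_of_one_le_left dist_nonneg hL1
    · simp only [vf, dif_neg h, Real.dist_eq]
      have : -∑ j : Fin n, A (j:ℕ) t * x j - -∑ j : Fin n, A (j:ℕ) t * y j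
          = -(∑ j : Fin n, A (j:ℕ) t * (x j - y j)) := by
        simp only [mul_sub, Finset.sum_sub_distrib]
        ring
      rw [this, abs_neg]
      have := hsumest t ht (fun j => x j - y j) (dist x y) dist_nonneg
        (fun j => by rw [← Real.dist_eq]; exact dist_le_pi_dist x y j)
      refine this.trans ?_
      have : Btot ≤ (L:ℝ) := by rw [hLval]; linarith
      exact mul_le_mul_of_nonneg_right this dist_nonneg
  · intro t ht x
    rw [pi_norm_le_iff_of_nonneg (by positivity)]
    intro i
    by_cases h : (i : ℕ) + 1 < n
    · simp only [vf, dif_pos h]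
      calc ‖x ⟨(i:ℕ)+1, h⟩‖ ≤ ‖x‖ := norm_le_pi_norm x _
      _ ≤ L * ‖x‖ := le_mul_of_one_le_left (norm_nonneg _) hL1
    · simp only [vf, dif_neg h, Real.norm_eq_abs, abs_neg]
      have := hsumest t ht x ‖x‖ (norm_nonneg _) (fun j => norm_le_pi_norm x j)
      refine this.trans ?_
      have hBL : Btot ≤ (L:ℝ) := by rw [hLval]; linarith
      exact mul_le_mul_of_nonneg_right hBL (norm_nonneg _)
  · intro x
    apply continuousOn_pi.2
    intro i
    by_cases h : (i : ℕ) + 1 < n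
    · simp only [vf, dif_pos h]
      exact continuousOn_const
    · simp only [vf, dif_neg h]
      refine ContinuousOn.neg ?_
      refine continuousOn_finset_sum _ fun j _ => ?_
      exact ((hA (j:ℕ) j.2).mono hsub).mul continuousOn_const


private lemma vf_def : ∀ (n : ℕ) (A : ℕ → ℝ → ℝ) (t : ℝ) (x : Fin n → ℝ) (i : Fin n),
    vf n A t x i = if h : (i : ℕ) + 1 < n then x ⟨(i:ℕ)+1, h⟩
      else -∑ j : Fin n, A (j:ℕ) t * x j := fun _ _ _ _ _ => rfl

private lemma exists_u {n : ℕ} {a b : ℝ} (hab : a < b) {A : ℕ → ℝ → ℝ}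
    (hA : ∀ i < n, ContinuousOn (A i) (Set.Ioo a b)) :
    ∃ u : ℝ → (Fin n → ℝ),
      u ((a+b)/2) = (fun j : Fin n => if (j:ℕ) = n-1 then (1:ℝ) else 0) ∧
      ∀ x ∈ Ioo a b, HasDerivAt u (vf n A x (u x)) x := by
  set t₀ : ℝ := (a+b)/2 with ht₀def
  have ht₀ : t₀ ∈ Ioo a b := ⟨by simp only [ht₀def]; linarith, by simp only [ht₀def]; linarith⟩
  set x₀ : Fin n → ℝ := fun j => if (j:ℕ) = n-1 then (1:ℝ) else 0 with hx₀def
  set lo : ℝ → ℝ := fun x => (a + min x t₀)/2 with hlodef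
  set hi : ℝ → ℝ := fun x => (max x t₀ + b)/2 with hhidef
  have hlo : ∀ x ∈ Ioo a b, a < lo x ∧ lo x < min x t₀ := by
    intro x hx
    have h1 : a < min x t₀ := lt_min hx.1 ht₀.1
    constructor <;> (simp only [hlodef]; linarith)
  have hhi : ∀ x ∈ Ioo a b, max x t₀ < hi x ∧ hi x < b := by
    intro x hx
    have h1 : max x t₀ < b := max_lt hx.2 ht₀.2
    constructor <;> (simp only [hhidef]; linarith)
  have hlohi : ∀ x ∈ Ioo a b, lo x ≤ hi x := fun x hx =>
    le_trans (hlo x hx).2.le (le_trans (min_le_right _ _)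
      (le_trans (le_max_right x t₀) (hhi x hx).1.le))
  have ex : ∀ x, x ∈ Ioo a b → ∃ f : ℝ → (Fin n → ℝ), f t₀ = x₀ ∧
      ∀ t ∈ Icc (lo x) (hi x), HasDerivWithinAt f (vf n A t (f t)) (Icc (lo x) (hi x)) t := by
    intro x hx
    obtain ⟨L, hL1, hL2, hL3⟩ := vf_bound hA (hlo x hx).1 (hhi x hx).2 (hlohi x hx)
    exact global_exists hL1 hL2 hL3
      ⟨le_trans (hlo x hx).2.le (min_le_right _ _),
       le_trans (le_max_right x t₀) (hhi x hx).1.le⟩ x₀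
  set u : ℝ → (Fin n → ℝ) :=
    fun x => if hx : x ∈ Ioo a b then Classical.choose (ex x hx) x else 0 with hudef
  have sol_unique : ∀ c d : ℝ, a < c → d < b → c ≤ t₀ → t₀ ≤ d →
      ∀ f : ℝ → (Fin n → ℝ), f t₀ = x₀ →
      (∀ t ∈ Icc c d, HasDerivWithinAt f (vf n A t (f t)) (Icc c d) t) →
      ∀ x ∈ Icc c d, x ∈ Ioo a b → f x = u x := by
    intro c d hc hd hct htd f hf0 hf x hx hxab
    have hF := Classical.choose_spec (ex x hxab)
    set F := Classical.choose (ex x hxab) with hFdef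
    have hux : u x = F x := by rw [hudef]; simp only [dif_pos hxab]; rfl
    rw [hux]
    set c' : ℝ := max c (lo x) with hc'def
    set d' : ℝ := min d (hi x) with hd'def
    have hc't : c' ≤ t₀ := max_le hct (le_trans (hlo x hxab).2.le (min_le_right _ _))
    have htd' : t₀ ≤ d' := le_min htd (le_trans (le_max_right x t₀) (hhi x hxab).1.le)
    have hac' : a < c' := lt_of_lt_of_le hc (le_max_left _ _)
    have hd'b : d' < b := lt_of_le_of_lt (min_le_left _ _) hd
    have hxc' : x ∈ Icc c' d' :=
      ⟨max_le hx.1 (le_trans (hlo x hxab).2.le (min_le_left _ _)),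
       le_min hx.2 (le_trans (le_max_left x t₀) (hhi x hxab).1.le)⟩
    have hsub1 : Icc c' d' ⊆ Icc c d := Icc_subset_Icc (le_max_left _ _) (min_le_left _ _)
    have hsub2 : Icc c' d' ⊆ Icc (lo x) (hi x) :=
      Icc_subset_Icc (le_max_right _ _) (min_le_right _ _)
    obtain ⟨K, hK1, _, _⟩ := vf_bound hA hac' hd'b (hc't.trans htd')
    refine unique_on_Icc hK1 ⟨hc't, htd'⟩
      (fun t ht => (hf t (hsub1 ht)).mono hsub1)
      (fun t ht => (hF.2 t (hsub2 ht)).mono hsub2)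
      (hf0.trans hF.1.symm) hxc'
  have hu0 : u t₀ = x₀ := by
    rw [hudef]; simp only [dif_pos ht₀]
    exact (Classical.choose_spec (ex t₀ ht₀)).1
  refine ⟨u, hu0, ?_⟩
  intro x hx
  have hF := Classical.choose_spec (ex x hx)
  set F := Classical.choose (ex x hx) with hFdef
  have hxmem : x ∈ Ioo (lo x) (hi x) :=
    ⟨lt_of_lt_of_le (hlo x hx).2 (min_le_left _ _),
     lt_of_le_of_lt (le_max_left x t₀) (hhi x hx).1⟩
  have hFx : HasDerivAt F (vf n A x (F x)) x :=
    (hF.2 x (Ioo_subset_Icc_self hxmem)).hasDerivAt (Icc_mem_nhds hxmem.1 hxmem.2)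
  have hUF : ∀ x' ∈ Ioo (lo x) (hi x), u x' = F x' := by
    intro x' hx'
    have hx'ab : x' ∈ Ioo a b :=
      ⟨lt_trans (hlo x hx).1 hx'.1, lt_trans hx'.2 (hhi x hx).2⟩
    exact (sol_unique (lo x) (hi x) (hlo x hx).1 (hhi x hx).2
      (le_trans (hlo x hx).2.le (min_le_right _ _))
      (le_trans (le_max_right x t₀) (hhi x hx).1.le)
      F hF.1 hF.2 x' (Ioo_subset_Icc_self hx') hx'ab).symm
  have hev : u =ᶠ[nhds x] F :=
    Filter.eventuallyEq_of_mem (Ioo_mem_nhds hxmem.1 hxmem.2) hUF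
  have h2 := hFx.congr_of_eventuallyEq hev
  rwa [← hev.eq_of_nhds] at h2




/-- Given continuous coefficients `a₀, …, a_{n-1}` on an open interval
`I = (a, b)` with `n ≥ 1`, there exists a function `y` that is `n`-times
(continuously) differentiable on `I`, solves the linear ODE
`y^(n) + a_{n-1} y^(n-1) + ⋯ + a₀ y = 0` on `I`, and is such that
`y, y', …, y^(n-1)` are linearly independent over `I`. -/
theorem exists_solution_with_independent_derivatives
    (n : ℕ) (hn : 1 ≤ n) (a b : ℝ) (hab : a < b)
    (A : ℕ → ℝ → ℝ) (hA : ∀ i < n, ContinuousOn (A i) (Set.Ioo a b)) :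
    ∃ y : ℝ → ℝ, ContDiffOn ℝ n y (Set.Ioo a b) ∧
      (∀ x ∈ Set.Ioo a b,
        iteratedDerivWithin n y (Set.Ioo a b) x
          + ∑ i ∈ Finset.range n, A i x * iteratedDerivWithin i y (Set.Ioo a b) x = 0) ∧
      (∀ c : ℕ → ℝ,
        (∀ x ∈ Set.Ioo a b,
          ∑ i ∈ Finset.range n, c i * iteratedDerivWithin i y (Set.Ioo a b) x = 0) →
        ∀ i < n, c i = 0) := by
  classical
  set s : Set ℝ := Set.Ioo a b with hsdef
  have hsopen : IsOpen s := isOpen_Ioo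
  have hsu : UniqueDiffOn ℝ s := hsopen.uniqueDiffOn
  set t₀ : ℝ := (a+b)/2 with ht₀def
  have ht₀ : t₀ ∈ s := ⟨by simp only [ht₀def]; linarith, by simp only [ht₀def]; linarith⟩
  obtain ⟨u, hu0, hud⟩ := exists_u hab hA
  set Y : ℕ → ℝ → ℝ := fun i x => if h : i < n then u x ⟨i, h⟩ else 0 with hYdef
  have hYeq : ∀ (i : ℕ) (h : i < n) (x : ℝ), Y i x = u x ⟨i, h⟩ := fun i h x => by
    simp only [hYdef, dif_pos h]
  -- component derivatives
  have hcomp : ∀ (i : Fin n), ∀ x ∈ s, HasDerivAt (fun t => u t i) (vf n A x (u x) i) x :=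
    fun i x hx => hasDerivAt_pi.1 (hud x hx) i
  have hYa : ∀ i : ℕ, i + 1 < n → ∀ x ∈ s, HasDerivAt (Y i) (Y (i+1) x) x := by
    intro i hi1 x hx
    have hi : i < n := Nat.lt_of_succ_lt hi1
    have h1 := hcomp ⟨i, hi⟩ x hx
    have h2 : vf n A x (u x) ⟨i, hi⟩ = Y (i+1) x := by
      rw [vf_def, hYeq (i+1) hi1 x]
      simp only [dif_pos hi1]
    rw [h2] at h1
    have h3 : Y i = fun t => u t ⟨i, hi⟩ := funext fun t => hYeq i hi t
    rw [h3]
    exact h1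
  have hYb : ∀ x ∈ s, HasDerivAt (Y (n-1))
      (-∑ j ∈ Finset.range n, A j x * Y j x) x := by
    intro x hx
    have hn1 : n - 1 < n := Nat.sub_lt hn Nat.one_pos
    have h1 := hcomp ⟨n-1, hn1⟩ x hx
    have hnot : ¬ ((n-1) + 1 < n) := by omega
    have h2 : vf n A x (u x) ⟨n-1, hn1⟩ = -∑ j ∈ Finset.range n, A j x * Y j x := by
      rw [vf_def]
      simp only [dif_neg hnot]
      congr 1
      rw [← Fin.sum_univ_eq_sum_range (fun j => A j x * Y j x)]
      refine Finset.sum_congr rfl fun j _ => ?_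
      rw [hYeq (j:ℕ) j.2 x]
    rw [h2] at h1
    have h3 : Y (n-1) = fun t => u t ⟨n-1, hn1⟩ := funext fun t => hYeq (n-1) hn1 t
    rw [h3]
    exact h1
  -- differentiability of the components
  have hYdiff : ∀ i < n, ∀ x ∈ s, HasDerivAt (Y i)
      (if h : i + 1 < n then Y (i+1) x else -∑ j ∈ Finset.range n, A j x * Y j x) x := by
    intro i hi x hx
    by_cases h : i + 1 < n
    · rw [dif_pos h]; exact hYa i h x hx
    · rw [dif_neg h]
      have : i = n - 1 := by omega
      rw [this]
      exact hYb x hx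
  have hYcont : ∀ i < n, ContinuousOn (Y i) s := fun i hi x hx =>
    ((hYdiff i hi x hx).differentiableAt.continuousAt).continuousWithinAt
  -- iterated derivatives
  set y : ℝ → ℝ := Y 0 with hydef
  have hiter : ∀ i, i < n → ∀ x ∈ s, iteratedDerivWithin i y s x = Y i x := by
    intro i
    induction i with
    | zero => intro _ x hx; simp [hydef, iteratedDerivWithin_zero]
    | succ i ih =>
      intro hi1 x hx
      have hi : i < n := Nat.lt_of_succ_lt hi1
      rw [iteratedDerivWithin_succ]
      rw [derivWithin_congr (fun x' hx' => ih hi x' hx') (ih hi x hx)]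
      rw [derivWithin_of_isOpen hsopen hx]
      exact (hYa i hi1 x hx).deriv
  have htop : ∀ x ∈ s, iteratedDerivWithin n y s x
      = -∑ j ∈ Finset.range n, A j x * Y j x := by
    intro x hx
    have hkey : n = (n-1) + 1 := by omega
    rw [hkey, iteratedDerivWithin_succ]
    have hn1 : n - 1 < n := by omega
    rw [derivWithin_congr (fun x' hx' => hiter (n-1) hn1 x' hx') (hiter (n-1) hn1 x hx)]
    rw [derivWithin_of_isOpen hsopen hx]
    rw [← hkey]
    exact (hYb x hx).deriv
  refine ⟨y, ?_, ?_, ?_⟩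
  · -- ContDiffOn
    rw [show ((n : WithTop ℕ∞)) = (((n:ℕ∞)) : WithTop ℕ∞) from rfl]
    rw [contDiffOn_iff_continuousOn_differentiableOn_deriv hsu]
    constructor
    · intro m hm
      rcases lt_or_eq_of_le (Nat.cast_le.mp hm) with h | h
      · exact (hYcont m h).congr (fun x hx => hiter m h x hx)
      · subst h
        have : ContinuousOn (fun x => -∑ j ∈ Finset.range m, A j x * Y j x) s := by
          refine ContinuousOn.neg ?_
          refine continuousOn_finset_sum _ fun j hj => ?_
          exact (hA j (Finset.mem_range.mp hj)).mul (hYcont j (Finset.mem_range.mp hj))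
        exact this.congr (fun x hx => htop x hx)
    · intro m hm
      have h : m < n := Nat.cast_lt.mp hm
      refine DifferentiableOn.congr ?_ (fun x hx => hiter m h x hx)
      exact fun x hx => ((hYdiff m h x hx).differentiableAt).differentiableWithinAt
  · -- the ODE
    intro x hx
    rw [htop x hx]
    have : ∑ i ∈ Finset.range n, A i x * iteratedDerivWithin i y s x
        = ∑ i ∈ Finset.range n, A i x * Y i x :=
      Finset.sum_congr rfl fun i hi => by rw [hiter i (Finset.mem_range.mp hi) x hx]
    rw [this]
    ring
  · -- independence
    intro c hc
    have hYval : ∀ p, p < n → Y p t₀ = if p = n-1 then 1 else 0 := by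
      intro p hp
      rw [hYeq p hp, hu0]
    by_contra hcon
    push_neg at hcon
    obtain ⟨i₀, hi₀n, hi₀⟩ := hcon
    set S : Finset ℕ := (Finset.range n).filter (fun j => c j ≠ 0) with hSdef
    have hS : S.Nonempty := ⟨i₀, Finset.mem_filter.mpr ⟨Finset.mem_range.mpr hi₀n, hi₀⟩⟩
    set m : ℕ := S.max' hS with hmdef
    have hmS := S.max'_mem hS
    have hmn : m < n := Finset.mem_range.mp (Finset.mem_filter.mp hmS).1
    have hcm : c m ≠ 0 := (Finset.mem_filter.mp hmS).2
    have hmax : ∀ j, m < j → j < n → c j = 0 := by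
      intro j hj hjn
      by_contra hcj
      exact absurd (S.le_max' j (Finset.mem_filter.mpr ⟨Finset.mem_range.mpr hjn, hcj⟩))
        (not_le.mpr hj)
    have hc' : ∀ x ∈ s, ∑ i ∈ Finset.range n, c i * Y i x = 0 := by
      intro x hx
      rw [← hc x hx]
      exact Finset.sum_congr rfl fun i hi => by
        rw [hiter i (Finset.mem_range.mp hi) x hx]
    have hsum0 : ∀ x ∈ s, ∑ i ∈ Finset.range (m+1), c i * Y i x = 0 := by
      intro x hx
      rw [Finset.sum_subset (Finset.range_subset_range.mpr (by omega : m+1 ≤ n))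
        (fun j hj hj2 => ?_)]
      · exact hc' x hx
      · have h1 : m < j := by
          simp only [Finset.mem_range] at hj2; omega
        rw [hmax j h1 (Finset.mem_range.mp hj), zero_mul]
    have key : ∀ j, j ≤ n-1-m → ∀ x ∈ s,
        ∑ i ∈ Finset.range (m+1), c i * Y (i+j) x = 0 := by
      intro j
      induction j with
      | zero => intro _ x hx; simpa using hsum0 x hx
      | succ j ih =>
        intro hj1 x hx
        have hj : j ≤ n-1-m := Nat.le_of_succ_le hj1
        have hgd : HasDerivAt (fun x' => ∑ i ∈ Finset.range (m+1), c i * Y (i+j) x')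
            (∑ i ∈ Finset.range (m+1), c i * Y (i+j+1) x) x := by
          refine HasDerivAt.fun_sum fun i hi => ?_
          refine HasDerivAt.const_mul (c i) ?_
          have hlt : (i+j) + 1 < n := by
            have := Finset.mem_range.mp hi; omega
          exact hYa (i+j) hlt x hx
        have hzero : HasDerivAt (fun x' => ∑ i ∈ Finset.range (m+1), c i * Y (i+j) x')
            (0:ℝ) x := by
          refine (hasDerivAt_const x (0:ℝ)).congr_of_eventuallyEq ?_
          exact Filter.eventuallyEq_of_mem (hsopen.mem_nhds hx) (fun x' hx' => ih hj x' hx')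
        have h0 := hgd.unique hzero
        have hrw : ∀ i : ℕ, i + (j+1) = i + j + 1 := fun i => by omega
        calc ∑ i ∈ Finset.range (m+1), c i * Y (i+(j+1)) x
            = ∑ i ∈ Finset.range (m+1), c i * Y (i+j+1) x :=
              Finset.sum_congr rfl fun i _ => by rw [hrw]
          _ = 0 := h0
    have hfin := key (n-1-m) le_rfl t₀ ht₀
    have heval : ∑ i ∈ Finset.range (m+1), c i * Y (i+(n-1-m)) t₀ = c m := by
      rw [Finset.sum_eq_single m]
      · have h1 : m + (n-1-m) = n-1 := by omega
        rw [h1, hYval (n-1) (by omega)]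
        simp
      · intro i hi hne
        have h2 : i < m := by
          have := Finset.mem_range.mp hi; omega
        have h3 : i + (n-1-m) < n - 1 := by omega
        rw [hYval (i+(n-1-m)) (by omega), if_neg (by omega), mul_zero]
      · intro hm2
        exact absurd (Finset.self_mem_range_succ m) hm2
    rw [hfin] at heval
    exact hcm heval.symm
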